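/- Let f be homogeneous of degree ν > 0 with respect to (λ^r, λ^q), and ℓ, ȷ be homogeneous of degree μ (ℓ(λ^r(ε)x, λ^q(ε)u) = ε^μ ℓ(x,u) and ȷ(λ^r(ε)x) = ε^μ ȷ(x)). Define the finite-horizon cost J_{d,γ1,γ2}(x,u) = Σ_{k=0}^{d-1} γ1^{γ2^k} ℓ(φ(k,x,u), u_k) + γ1^{γ2^d} ȷ(φ(d,x,u)) and the value function V_{d,γ1,γ2}(x) = inf over input sequences of J_{d,γ1,γ2}(x,·). Assume minimizers exist for all these problems with finite value. Then for every x and ε > 0: V_{d,ε^{-μ},ν}(λ^r(ε)x) = V_{d,1,1}(x), and if u* is optimal for J_{d,1,1} at x, then the scaled sequence Λ(ε)u* (k-th element λ^q(ε)^{ν^k} u*_k) is optimal for J_{d,ε^{-μ},ν} at λ^r(ε)x. -/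
import Mathlib


open scoped ENNReal

noncomputable section

def dil {n : ℕ} (r : Fin n → ℝ) (ε : ℝ) (x : Fin n → ℝ) : Fin n → ℝ :=
  fun i => ε ^ (r i) * x i

def dilPow {n : ℕ} (r : Fin n → ℝ) (ε c : ℝ) (x : Fin n → ℝ) : Fin n → ℝ :=
  fun i => ε ^ (c * r i) * x i

def sol {n m : ℕ} (f : (Fin n → ℝ) → (Fin m → ℝ) → Fin n → ℝ)
    (u : ℕ → Fin m → ℝ) (x : Fin n → ℝ) : ℕ → Fin n → ℝ
  | 0 => x
  | k + 1 => f (sol f u x k) (u k)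

/-- Cost `J_{d,γ1,γ2}(x,u) = Σ_{k<d} γ1^{γ2^k} ℓ(φ(k,x,u),u_k) + γ1^{γ2^d} ȷ(φ(d,x,u))`. -/
def cost {n m : ℕ} (f : (Fin n → ℝ) → (Fin m → ℝ) → Fin n → ℝ)
    (ℓ : (Fin n → ℝ) → (Fin m → ℝ) → ℝ≥0∞) (J : (Fin n → ℝ) → ℝ≥0∞)
    (d : ℕ) (γ1 γ2 : ℝ) (x : Fin n → ℝ) (u : ℕ → Fin m → ℝ) : ℝ≥0∞ :=
  (∑ k ∈ Finset.range d, ENNReal.ofReal (γ1 ^ (γ2 ^ k)) * ℓ (sol f u x k) (u k))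
    + ENNReal.ofReal (γ1 ^ (γ2 ^ d)) * J (sol f u x d)

/-- Optimal value function `V_{d,γ1,γ2}(x)`. -/
def val {n m : ℕ} (f : (Fin n → ℝ) → (Fin m → ℝ) → Fin n → ℝ)
    (ℓ : (Fin n → ℝ) → (Fin m → ℝ) → ℝ≥0∞) (J : (Fin n → ℝ) → ℝ≥0∞)
    (d : ℕ) (γ1 γ2 : ℝ) (x : Fin n → ℝ) : ℝ≥0∞ :=
  ⨅ u : ℕ → Fin m → ℝ, cost f ℓ J d γ1 γ2 x u


section Aux

variable {n m : ℕ}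

lemma dilPow_eq_dil (r : Fin n → ℝ) {ε : ℝ} (hε : 0 < ε) (c : ℝ) (x : Fin n → ℝ) :
    dilPow r ε c x = dil r (ε ^ c) x := by
  funext i
  simp only [dilPow, dil]
  rw [← Real.rpow_mul hε.le]

lemma dilPow_dilPow (q : Fin m → ℝ) {ε : ℝ} (hε : 0 < ε) (c : ℝ) (x : Fin m → ℝ) :
    dilPow q ε c (dilPow q ε (-c) x) = x := by
  funext i
  simp only [dilPow, ← mul_assoc, ← Real.rpow_add hε, neg_mul]
  simp

lemma sol_scaled (f : (Fin n → ℝ) → (Fin m → ℝ) → Fin n → ℝ)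
    (r : Fin n → ℝ) (q : Fin m → ℝ) (ν : ℝ)
    (hf : ∀ x u (ε : ℝ), 0 < ε → f (dil r ε x) (dil q ε u) = dilPow r ε ν (f x u))
    {ε : ℝ} (hε : 0 < ε) (x : Fin n → ℝ) (u : ℕ → Fin m → ℝ) :
    ∀ k, sol f (fun k => dilPow q ε (ν ^ k) (u k)) (dil r ε x) k
      = dilPow r ε (ν ^ k) (sol f u x k) := by
  intro k
  induction k with
  | zero =>
      simp only [sol, pow_zero]
      funext i
      simp [dilPow, dil]
  | succ k ih =>
      have hε' : 0 < ε ^ (ν ^ k : ℝ) := Real.rpow_pos_of_pos hε _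
      simp only [sol, ih]
      rw [dilPow_eq_dil r hε, dilPow_eq_dil q hε, hf _ _ _ hε']
      funext i
      simp only [dilPow]
      rw [← Real.rpow_mul hε.le]
      have h : (ν ^ k : ℝ) * (ν * r i) = ν ^ (k + 1) * r i := by
        rw [pow_succ]; ring
      rw [h]

lemma cost_scaled (f : (Fin n → ℝ) → (Fin m → ℝ) → Fin n → ℝ)
    (ℓ : (Fin n → ℝ) → (Fin m → ℝ) → ℝ≥0∞) (J : (Fin n → ℝ) → ℝ≥0∞)
    (r : Fin n → ℝ) (q : Fin m → ℝ) (ν μ : ℝ)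
    (hf : ∀ x u (ε : ℝ), 0 < ε → f (dil r ε x) (dil q ε u) = dilPow r ε ν (f x u))
    (hℓ : ∀ x u (ε : ℝ), 0 < ε →
      ℓ (dil r ε x) (dil q ε u) = ENNReal.ofReal (ε ^ μ) * ℓ x u)
    (hJ : ∀ x (ε : ℝ), 0 < ε → J (dil r ε x) = ENNReal.ofReal (ε ^ μ) * J x)
    (d : ℕ) {ε : ℝ} (hε : 0 < ε) (x : Fin n → ℝ) (u : ℕ → Fin m → ℝ) :
    cost f ℓ J d (ε ^ (-μ)) ν (dil r ε x) (fun k => dilPow q ε (ν ^ k) (u k))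
      = cost f ℓ J d 1 1 x u := by
  have key : ∀ c : ℝ, ENNReal.ofReal ((ε ^ (-μ) : ℝ) ^ c)
      * ENNReal.ofReal ((ε ^ c : ℝ) ^ μ) = 1 := by
    intro c
    rw [← ENNReal.ofReal_mul (Real.rpow_nonneg (Real.rpow_nonneg hε.le _) _),
      ← Real.rpow_mul hε.le, ← Real.rpow_mul hε.le, ← Real.rpow_add hε,
      show -μ * c + c * μ = (0:ℝ) by ring, Real.rpow_zero, ENNReal.ofReal_one]
  have hε' : ∀ c : ℝ, 0 < ε ^ c := fun c => Real.rpow_pos_of_pos hε c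
  simp only [cost]
  congr 1
  · apply Finset.sum_congr rfl
    intro k _
    rw [sol_scaled f r q ν hf hε x u k, dilPow_eq_dil r hε, dilPow_eq_dil q hε,
      hℓ _ _ _ (hε' _), ← mul_assoc, ← Real.rpow_natCast ν k, key, one_pow,
      Real.rpow_one, ENNReal.ofReal_one, one_mul]
  · rw [sol_scaled f r q ν hf hε x u d, dilPow_eq_dil r hε,
      hJ _ _ (hε' _), ← mul_assoc, ← Real.rpow_natCast ν d, key, one_pow,
      Real.rpow_one, ENNReal.ofReal_one, one_mul]

end Aux

theorem stmt2 {n m : ℕ} (f : (Fin n → ℝ) → (Fin m → ℝ) → Fin n → ℝ)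
    (ℓ : (Fin n → ℝ) → (Fin m → ℝ) → ℝ≥0∞) (J : (Fin n → ℝ) → ℝ≥0∞)
    (r : Fin n → ℝ) (q : Fin m → ℝ) (ν μ : ℝ)
    (hr : ∀ i, 0 < r i) (hq : ∀ j, 0 < q j) (hν : 0 < ν)
    (hf : ∀ x u (ε : ℝ), 0 < ε → f (dil r ε x) (dil q ε u) = dilPow r ε ν (f x u))
    (hℓ : ∀ x u (ε : ℝ), 0 < ε →
      ℓ (dil r ε x) (dil q ε u) = ENNReal.ofReal (ε ^ μ) * ℓ x u)
    (hJ : ∀ x (ε : ℝ), 0 < ε → J (dil r ε x) = ENNReal.ofReal (ε ^ μ) * J x)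
    (d : ℕ) (hd : 0 < d)
    (hex : ∀ (γ1 γ2 : ℝ), 0 < γ1 → ∀ x : Fin n → ℝ,
      ∃ u, cost f ℓ J d γ1 γ2 x u = val f ℓ J d γ1 γ2 x ∧ cost f ℓ J d γ1 γ2 x u ≠ ⊤) :
    ∀ (x : Fin n → ℝ) (ε : ℝ), 0 < ε →
      val f ℓ J d (ε ^ (-μ)) ν (dil r ε x) = val f ℓ J d 1 1 x ∧
      ∀ ustar : ℕ → Fin m → ℝ,
        cost f ℓ J d 1 1 x ustar = val f ℓ J d 1 1 x →
        cost f ℓ J d (ε ^ (-μ)) ν (dil r ε x) (fun k => dilPow q ε (ν ^ k) (ustar k))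
          = val f ℓ J d (ε ^ (-μ)) ν (dil r ε x) := by
  intro x ε hε
  have hsurj : Function.Surjective
      (fun u : ℕ → Fin m → ℝ => fun k => dilPow q ε (ν ^ k) (u k)) := by
    intro v
    exact ⟨fun k => dilPow q ε (-(ν ^ k)) (v k), funext fun k => dilPow_dilPow q hε _ _⟩
  have hval : val f ℓ J d (ε ^ (-μ)) ν (dil r ε x) = val f ℓ J d 1 1 x := by
    unfold val
    rw [← hsurj.iInf_comp (fun u => cost f ℓ J d (ε ^ (-μ)) ν (dil r ε x) u)]
    exact iInf_congr fun u => cost_scaled f ℓ J r q ν μ hf hℓ hJ d hε x u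
  refine ⟨hval, fun ustar hopt => ?_⟩
  rw [cost_scaled f ℓ J r q ν μ hf hℓ hJ d hε x ustar, hopt, hval]
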